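/- Let Q⁴ be a unit 4-cube and let F² be a single 2-face of Q⁴. Then F² meets exactly twelve other 2-faces of Q⁴, and the eleven 2-faces of Q⁴ disjoint from F² are distributed as follows: six of them lie in one 3-face C³ of Q⁴, and the remaining five lie in a neighboring 3-face D³ with C³ ∩ D³ a single 2-face. -/
import Mathlib


open scoped Classical

/-- A `k`-dimensional face of the cubulation of `ℝⁿ` at scale `1/m`:
free coordinates in `S`, the rest fixed at lattice values `v i / m`. -/
def sFace (n m : ℕ) (v : Fin n → ℤ) (S : Finset (Fin n)) : Set (Fin n → ℝ) :=
  {x | ∀ i, (i ∈ S → (v i : ℝ) / m ≤ x i ∧ x i ≤ ((v i : ℝ) + 1) / m) ∧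
        (i ∉ S → x i = (v i : ℝ) / m)}

/-- The collection of all `k`-faces of the cubulation of `ℝⁿ` at scale `1/m`. -/
def sFaces (n m k : ℕ) : Set (Set (Fin n → ℝ)) :=
  {F | ∃ (v : Fin n → ℤ) (S : Finset (Fin n)), S.card = k ∧ F = sFace n m v S}

/-- The `k`-skeleton of the cubulation of `ℝⁿ` at scale `1/m`. -/
def skeleton (n m k : ℕ) : Set (Fin n → ℝ) := ⋃₀ sFaces n m k


/-- The unit 4-cube `[0,1]⁴`. -/
def Q4 : Set (Fin 4 → ℝ) := sFace 4 1 0 Finset.univ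

/-- The 2-faces of the unit 4-cube. -/
def twoFacesQ4 : Set (Set (Fin 4 → ℝ)) := {G ∈ sFaces 4 1 2 | G ⊆ Q4}

/-- The 3-faces of the unit 4-cube. -/
def threeFacesQ4 : Set (Set (Fin 4 → ℝ)) := {G ∈ sFaces 4 1 3 | G ⊆ Q4}

-- boolean value
def bval (b : Fin 4 → Bool) (i : Fin 4) : ℝ := if b i then 1 else 0

def pface (s : Finset (Fin 4)) (b : Fin 4 → Bool) : Set (Fin 4 → ℝ) :=
  sFace 4 1 (fun i => if b i then 1 else 0) s

lemma mem_sFace_one (v : Fin 4 → ℤ) (S : Finset (Fin 4)) (x : Fin 4 → ℝ) :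
    x ∈ sFace 4 1 v S ↔
      ∀ i, (i ∈ S → (v i : ℝ) ≤ x i ∧ x i ≤ (v i : ℝ) + 1) ∧ (i ∉ S → x i = v i) := by
  simp [sFace, Set.mem_setOf_eq]

lemma mem_pface {s : Finset (Fin 4)} {b : Fin 4 → Bool} (hb : ∀ i ∈ s, b i = false)
    (x : Fin 4 → ℝ) :
    x ∈ pface s b ↔ ∀ i, (i ∈ s → 0 ≤ x i ∧ x i ≤ 1) ∧ (i ∉ s → x i = bval b i) := by
  rw [pface, mem_sFace_one]
  constructor <;> intro h i <;> obtain ⟨h1, h2⟩ := h i <;> refine ⟨fun hi => ?_, fun hi => ?_⟩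
  · have := h1 hi; simp [hb i hi] at this; simpa using this
  · have := h2 hi; simp [bval]; split <;> simp_all
  · have := h1 hi; simp [hb i hi]; simpa using this
  · have := h2 hi; simp [bval] at this; split <;> simp_all

lemma mem_Q4 (x : Fin 4 → ℝ) : x ∈ Q4 ↔ ∀ i, 0 ≤ x i ∧ x i ≤ 1 := by
  simp [Q4, mem_sFace_one]

lemma bval_mem (b : Fin 4 → Bool) (i : Fin 4) : 0 ≤ bval b i ∧ bval b i ≤ 1 := by
  simp [bval]; split <;> norm_num

lemma pface_subset_Q4 {s : Finset (Fin 4)} {b : Fin 4 → Bool} (hb : ∀ i ∈ s, b i = false) :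
    pface s b ⊆ Q4 := by
  intro x hx
  rw [mem_pface hb] at hx
  rw [mem_Q4]
  intro i
  obtain ⟨h1, h2⟩ := hx i
  by_cases hi : i ∈ s
  · exact h1 hi
  · rw [h2 hi]; exact bval_mem b i

lemma pface_mem_sFaces {s : Finset (Fin 4)} (b : Fin 4 → Bool) :
    pface s b ∈ sFaces 4 1 s.card := ⟨_, s, rfl, rfl⟩

/-- the corner point of a normalized face -/
lemma corner_mem {s : Finset (Fin 4)} {b : Fin 4 → Bool} (hb : ∀ i ∈ s, b i = false) :
    (fun i => bval b i) ∈ pface s b := by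
  rw [mem_pface hb]
  intro i
  exact ⟨fun _ => bval_mem b i, fun _ => rfl⟩

/-- the half point -/
lemma half_mem {s : Finset (Fin 4)} {b : Fin 4 → Bool} (hb : ∀ i ∈ s, b i = false)
    {i : Fin 4} (hi : i ∈ s) :
    (fun l => if l = i then (1:ℝ)/2 else bval b l) ∈ pface s b := by
  rw [mem_pface hb]
  intro l
  refine ⟨fun hl => ?_, fun hl => ?_⟩
  · split
    · norm_num
    · exact bval_mem b l
  · have : l ≠ i := fun h => hl (h ▸ hi)
    simp [this]

lemma half_not_bval (b : Fin 4 → Bool) : ((1:ℝ)/2) ≠ bval b i := by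
  simp [bval]; split <;> norm_num

/-- representation: any k-face inside Q4 is a normalized pface -/
lemma repr_face {F : Set (Fin 4 → ℝ)} {k : ℕ} (h1 : F ∈ sFaces 4 1 k) (h2 : F ⊆ Q4) :
    ∃ s b, s.card = k ∧ (∀ i ∈ s, b i = false) ∧ F = pface s b := by
  obtain ⟨v, S, hcard, rfl⟩ := h1
  have hc : (fun i => (v i : ℝ)) ∈ sFace 4 1 v S := by
    rw [mem_sFace_one]; intro i
    exact ⟨fun _ => ⟨le_refl _, by linarith⟩, fun _ => rfl⟩
  have hc2 : (fun i => if i ∈ S then (v i : ℝ) + 1 else (v i : ℝ)) ∈ sFace 4 1 v S := by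
    rw [mem_sFace_one]; intro i
    refine ⟨fun hi => ?_, fun hi => ?_⟩ <;> simp [hi]
  have hQ1 := (mem_Q4 _).1 (h2 hc)
  have hQ2 := (mem_Q4 _).1 (h2 hc2)
  refine ⟨S, fun i => if i ∈ S then false else decide (v i = 1), hcard, by intro i hi; simp [hi], ?_⟩
  have hv : ∀ i, (v i : ℝ) = if (if i ∈ S then false else decide (v i = 1)) then 1 else 0 := by
    intro i
    by_cases hi : i ∈ S
    · have := hQ1 i
      have := (hQ2 i)
      simp [hi] at *
      linarith
    · have h0 := (hQ1 i).1
      have h1 := (hQ1 i).2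
      have : v i = 0 ∨ v i = 1 := by
        have : (0:ℤ) ≤ v i := by exact_mod_cast h0
        have : v i ≤ 1 := by exact_mod_cast h1
        omega
      rcases this with h | h <;> simp [hi, h]
  unfold pface
  ext x
  rw [mem_sFace_one, mem_sFace_one]
  constructor <;> intro h i <;> obtain ⟨ha, hb⟩ := h i <;>
    refine ⟨fun hi => ?_, fun hi => ?_⟩ <;>
    [skip; skip; skip; skip] <;>
    first
    | (have := ha hi; rw [hv i] at *; simpa using this)
    | (have := hb hi; rw [hv i] at *; simpa using this)

lemma subset_s_of_subset {s t : Finset (Fin 4)} {b c : Fin 4 → Bool}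
    (hb : ∀ i ∈ s, b i = false) (hc : ∀ i ∈ t, c i = false)
    (h : pface s b ⊆ pface t c) : s ⊆ t := by
  intro i hi
  by_contra hit
  have hx := h (half_mem hb hi)
  rw [mem_pface hc] at hx
  have := (hx i).2 hit
  simp only [if_pos rfl] at this
  exact half_not_bval c this

lemma bval_eq_of_subset {s t : Finset (Fin 4)} {b c : Fin 4 → Bool}
    (hb : ∀ i ∈ s, b i = false)
    (h : pface s b ⊆ pface t c) {i : Fin 4} (hi : i ∉ t) : b i = c i := by
  have hx := h (corner_mem hb)
  rw [pface, mem_sFace_one] at hx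
  have := (hx i).2 hi
  simp only [bval] at this
  rcases hbi : b i <;> rcases hci : c i <;> rw [hbi, hci] at this <;> simp at this <;> rfl

lemma pface_subset_iff {s t : Finset (Fin 4)} {b c : Fin 4 → Bool}
    (hb : ∀ i ∈ s, b i = false) (hc : ∀ i ∈ t, c i = false) :
    pface s b ⊆ pface t c ↔ s ⊆ t ∧ ∀ i ∉ t, b i = c i := by
  constructor
  · intro h
    exact ⟨subset_s_of_subset hb hc h, fun i hi => bval_eq_of_subset hb h hi⟩
  · rintro ⟨hst, hv⟩ x hx
    rw [mem_pface hb] at hx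
    rw [mem_pface hc]
    intro i
    obtain ⟨h1, h2⟩ := hx i
    refine ⟨fun hi => ?_, fun hi => ?_⟩
    · by_cases his : i ∈ s
      · exact h1 his
      · rw [h2 his]; exact bval_mem b i
    · have his : i ∉ s := fun h => hi (hst h)
      rw [h2 his, bval, bval, hv i hi]

lemma pface_inj {s t : Finset (Fin 4)} {b c : Fin 4 → Bool}
    (hb : ∀ i ∈ s, b i = false) (hc : ∀ i ∈ t, c i = false)
    (h : pface s b = pface t c) : s = t ∧ b = c := by
  have h1 := (pface_subset_iff hb hc).1 h.le
  have h2 := (pface_subset_iff hc hb).1 h.ge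
  have hst : s = t := le_antisymm h1.1 h2.1
  refine ⟨hst, funext fun i => ?_⟩
  by_cases hi : i ∈ t
  · rw [hb i (hst ▸ hi), hc i hi]
  · exact h1.2 i hi

lemma pface_disjoint_iff {s t : Finset (Fin 4)} {b c : Fin 4 → Bool}
    (hb : ∀ i ∈ s, b i = false) (hc : ∀ i ∈ t, c i = false) :
    pface s b ∩ pface t c = ∅ ↔ ∃ i, i ∉ s ∧ i ∉ t ∧ b i ≠ c i := by
  constructor
  · intro h
    by_contra hno
    push_neg at hno
    have : (fun i => if i ∈ s then bval c i else bval b i) ∈ pface s b ∩ pface t c := by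
      constructor
      · rw [mem_pface hb]
        intro i
        refine ⟨fun hi => by simp [hi]; exact bval_mem c i, fun hi => by simp [hi]⟩
      · rw [mem_pface hc]
        intro i
        refine ⟨fun hi => ?_, fun hi => ?_⟩
        · split
          · exact bval_mem c i
          · exact bval_mem b i
        · by_cases his : i ∈ s
          · simp [his]
          · simp [his, bval, hno i his hi]
    rw [h] at this
    exact this
  · rintro ⟨i, his, hit, hbc⟩
    ext x
    simp only [Set.mem_inter_iff, Set.mem_empty_iff_false, iff_false]
    rintro ⟨hx1, hx2⟩
    rw [mem_pface hb] at hx1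
    rw [mem_pface hc] at hx2
    have e1 := (hx1 i).2 his
    have e2 := (hx2 i).2 hit
    rw [e1] at e2
    simp only [bval] at e2
    split at e2 <;> split at e2 <;> simp_all

lemma pface_eq_iff {s t : Finset (Fin 4)} {b c : Fin 4 → Bool}
    (hb : ∀ i ∈ s, b i = false) (hc : ∀ i ∈ t, c i = false) :
    pface s b = pface t c ↔ s = t ∧ b = c := by
  constructor
  · exact pface_inj hb hc
  · rintro ⟨rfl, rfl⟩; rfl

lemma three_face_inter {i j : Fin 4} (hij : i ≠ j) (u w : Bool) :
    pface ({i}ᶜ) (fun l => if l = i then u else false) ∩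
      pface ({j}ᶜ) (fun l => if l = j then w else false) =
    pface ({i, j}ᶜ) (fun l => if l = i then u else if l = j then w else false) := by
  have hbi : ∀ l ∈ ({i}ᶜ : Finset (Fin 4)), (if l = i then u else false) = false := by
    intro l hl; simp at hl; simp [hl]
  have hbj : ∀ l ∈ ({j}ᶜ : Finset (Fin 4)), (if l = j then w else false) = false := by
    intro l hl; simp at hl; simp [hl]
  have hbij : ∀ l ∈ ({i, j}ᶜ : Finset (Fin 4)),
      (if l = i then u else if l = j then w else false) = false := by
    intro l hl; simp at hl; simp [hl.1, hl.2]
  ext x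
  simp only [Set.mem_inter_iff, mem_pface hbi, mem_pface hbj, mem_pface hbij]
  constructor
  · rintro ⟨h1, h2⟩
    intro l
    refine ⟨fun hl => ?_, fun hl => ?_⟩
    · simp at hl
      exact (h1 l).1 (by simp [hl.1])
    · simp at hl
      by_cases hli : l = i
      · subst hli
        have := (h1 l).2 (by simp)
        simpa [bval] using this
      · have hlj := hl hli
        subst hlj
        have := (h2 l).2 (by simp)
        rw [this]
        simp [bval, hli]
  · intro h
    constructor
    · intro l
      refine ⟨fun hl => ?_, fun hl => ?_⟩
      · simp at hl
        by_cases hlj : l = j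
        · subst hlj
          have := (h l).2 (by simp)
          rw [this]
          constructor <;> simp [bval, hl, hij] <;> split <;> norm_num
        · exact (h l).1 (by simp [hl, hlj])
      · simp at hl
        subst hl
        have := (h l).2 (by simp)
        rw [this]
        simp [bval]
    · intro l
      refine ⟨fun hl => ?_, fun hl => ?_⟩
      · simp at hl
        by_cases hli : l = i
        · subst hli
          have := (h l).2 (by simp)
          rw [this]
          constructor <;> simp [bval] <;> split <;> norm_num
        · exact (h l).1 (by simp [hl, hli])
      · simp at hl
        subst hl
        have := (h l).2 (by simp)
        rw [this]
        simp [bval, Ne.symm hij]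

abbrev Pm := Finset (Fin 4) × (Fin 4 → Bool)

lemma pface_mem_twoFaces {s : Finset (Fin 4)} {b : Fin 4 → Bool}
    (hcard : s.card = 2) (hb : ∀ i ∈ s, b i = false) : pface s b ∈ twoFacesQ4 :=
  ⟨hcard ▸ pface_mem_sFaces b, pface_subset_Q4 hb⟩

lemma ncard_filter_two (Q : Set (Fin 4 → ℝ) → Prop) (P : Pm → Prop) [DecidablePred P]
    (h : ∀ s b, s.card = 2 → (∀ i ∈ s, b i = false) → (Q (pface s b) ↔ P (s, b))) :
    {G ∈ twoFacesQ4 | Q G}.ncard =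
      (Finset.univ.filter
        (fun p : Pm => p.1.card = 2 ∧ (∀ i ∈ p.1, p.2 i = false) ∧ P p)).card := by
  have hset : {G ∈ twoFacesQ4 | Q G} =
      (fun p : Pm => pface p.1 p.2) '' ↑(Finset.univ.filter
        (fun p : Pm => p.1.card = 2 ∧ (∀ i ∈ p.1, p.2 i = false) ∧ P p)) := by
    ext G
    constructor
    · rintro ⟨⟨hG1, hG2⟩, hQ⟩
      obtain ⟨s, b, hcard, hb, rfl⟩ := repr_face hG1 hG2
      refine ⟨(s, b), ?_, rfl⟩
      simp only [Finset.coe_filter, Finset.mem_univ, true_and, Set.mem_setOf_eq]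
      exact ⟨hcard, hb, (h s b hcard hb).1 hQ⟩
    · rintro ⟨⟨s, b⟩, hp, rfl⟩
      simp only [Finset.coe_filter, Finset.mem_univ, true_and, Set.mem_setOf_eq] at hp
      obtain ⟨hcard, hb, hP⟩ := hp
      exact ⟨pface_mem_twoFaces hcard hb, (h s b hcard hb).2 hP⟩
  rw [hset, Set.ncard_image_of_injOn, Set.ncard_coe_finset]
  rintro ⟨s, b⟩ hp ⟨t, c⟩ hq heq
  simp only [Finset.coe_filter, Finset.mem_univ, true_and, Set.mem_setOf_eq] at hp hq
  obtain ⟨hst, hbc⟩ := pface_inj hp.2.1 hq.2.1 heq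
  simp [hst, hbc]

lemma bool_ne_iff {a b : Bool} : a ≠ b ↔ a = !b := by cases a <;> cases b <;> simp

set_option maxHeartbeats 1000000 in
lemma count_12 (s₀ : Finset (Fin 4)) (hs : s₀.card = 2) (b₀ : Fin 4 → Bool)
    (hb : ∀ i ∈ s₀, b₀ i = false) :
    (Finset.univ.filter (fun p : Pm => p.1.card = 2 ∧ (∀ i ∈ p.1, p.2 i = false) ∧
      (p ≠ (s₀, b₀) ∧ ¬∃ k, k ∉ p.1 ∧ k ∉ s₀ ∧ p.2 k ≠ b₀ k))).card = 12 := by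
  revert s₀ hs b₀ hb; decide

set_option maxHeartbeats 1000000 in
lemma count_11 (s₀ : Finset (Fin 4)) (hs : s₀.card = 2) (b₀ : Fin 4 → Bool)
    (hb : ∀ i ∈ s₀, b₀ i = false) :
    (Finset.univ.filter (fun p : Pm => p.1.card = 2 ∧ (∀ i ∈ p.1, p.2 i = false) ∧
      (∃ k, k ∉ p.1 ∧ k ∉ s₀ ∧ p.2 k ≠ b₀ k))).card = 11 := by
  revert s₀ hs b₀ hb; decide

set_option maxHeartbeats 2000000 in
lemma count_6 (s₀ : Finset (Fin 4)) (hs : s₀.card = 2) (b₀ : Fin 4 → Bool)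
    (hb : ∀ i ∈ s₀, b₀ i = false) (i : Fin 4) (hi : i ∉ s₀) :
    (Finset.univ.filter (fun p : Pm => p.1.card = 2 ∧ (∀ i ∈ p.1, p.2 i = false) ∧
      ((∃ k, k ∉ p.1 ∧ k ∉ s₀ ∧ p.2 k ≠ b₀ k) ∧
        (i ∉ p.1 ∧ p.2 i = !b₀ i)))).card = 6 := by
  revert s₀ hs b₀ hb i hi; decide

set_option maxHeartbeats 4000000 in
lemma count_5 (s₀ : Finset (Fin 4)) (hs : s₀.card = 2) (b₀ : Fin 4 → Bool)
    (hb : ∀ i ∈ s₀, b₀ i = false) (i j : Fin 4) (hi : i ∉ s₀) (hj : j ∉ s₀) (hij : i ≠ j) :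
    (Finset.univ.filter (fun p : Pm => p.1.card = 2 ∧ (∀ i ∈ p.1, p.2 i = false) ∧
      ((∃ k, k ∉ p.1 ∧ k ∉ s₀ ∧ p.2 k ≠ b₀ k) ∧
        ((j ∉ p.1 ∧ p.2 j = !b₀ j) ∧ ¬(i ∉ p.1 ∧ p.2 i = !b₀ i))))).card = 5 := by
  revert s₀ hs b₀ hb i j hi hj hij; decide

lemma norm_compl (i : Fin 4) (u : Bool) :
    ∀ l ∈ ({i}ᶜ : Finset (Fin 4)), (if l = i then u else false) = false := by
  intro l hl; simp at hl; simp [hl]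

lemma subset_compl_face {t : Finset (Fin 4)} {c : Fin 4 → Bool}
    (hc : ∀ l ∈ t, c l = false) (i : Fin 4) (u : Bool) :
    pface t c ⊆ pface ({i}ᶜ) (fun l => if l = i then u else false) ↔ i ∉ t ∧ c i = u := by
  rw [pface_subset_iff hc (norm_compl i u)]
  constructor
  · rintro ⟨h1, h2⟩
    refine ⟨fun hit => by simpa using h1 hit, ?_⟩
    have := h2 i (by simp)
    simpa using this
  · rintro ⟨h1, h2⟩
    refine ⟨Finset.subset_compl_singleton.2 h1, fun l hl => ?_⟩
    simp at hl
    subst hl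
    simpa using h2


/-- a 2-face `F` of the 4-cube meets exactly twelve other 2-faces, and the
eleven 2-faces disjoint from `F` split as six in a 3-face `C³` and five in a neighboring
3-face `D³` with `C³ ∩ D³` a 2-face. -/
theorem one_square_complement (F : Set (Fin 4 → ℝ)) (hF : F ∈ twoFacesQ4) :
    {G ∈ twoFacesQ4 | G ≠ F ∧ (G ∩ F).Nonempty}.ncard = 12 ∧
    {G ∈ twoFacesQ4 | G ∩ F = ∅}.ncard = 11 ∧
    ∃ C ∈ threeFacesQ4, ∃ D ∈ threeFacesQ4,
      C ∩ D ∈ sFaces 4 1 2 ∧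
      {G ∈ twoFacesQ4 | G ∩ F = ∅ ∧ G ⊆ C}.ncard = 6 ∧
      {G ∈ twoFacesQ4 | G ∩ F = ∅ ∧ G ⊆ D ∧ ¬ G ⊆ C}.ncard = 5 ∧
      ∀ G ∈ twoFacesQ4, G ∩ F = ∅ → G ⊆ C ∨ G ⊆ D := by
  obtain ⟨hF1, hF2⟩ := hF
  obtain ⟨s₀, b₀, hs₀, hb₀, rfl⟩ := repr_face hF1 hF2
  have hcompl : (s₀ᶜ).card = 2 := by rw [Finset.card_compl, hs₀]; rfl
  obtain ⟨i, j, hij, hij2⟩ := Finset.card_eq_two.1 hcompl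
  have hi : i ∉ s₀ := by
    have : i ∈ s₀ᶜ := hij2 ▸ (by simp)
    simpa using this
  have hj : j ∉ s₀ := by
    have : j ∈ s₀ᶜ := hij2 ▸ (by simp)
    simpa using this
  set C := pface ({i}ᶜ) (fun l => if l = i then !b₀ i else false) with hC
  set D := pface ({j}ᶜ) (fun l => if l = j then !b₀ j else false) with hD
  have hne : ∀ s b, (∀ l ∈ s, b l = false) →
      ((pface s b ≠ pface s₀ b₀) ↔ (s, b) ≠ (s₀, b₀)) := by
    intro s b hb
    rw [Ne, Ne, pface_eq_iff hb hb₀, Prod.mk.injEq]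
  have hdisj : ∀ s b, (∀ l ∈ s, b l = false) →
      ((pface s b ∩ pface s₀ b₀ = ∅) ↔ ∃ k, k ∉ s ∧ k ∉ s₀ ∧ b k ≠ b₀ k) :=
    fun s b hb => pface_disjoint_iff hb hb₀
  refine ⟨?_, ?_, C, ?_, D, ?_, ?_, ?_, ?_, ?_⟩
  · refine (ncard_filter_two _ (fun p : Pm => p ≠ (s₀, b₀) ∧
      ¬∃ k, k ∉ p.1 ∧ k ∉ s₀ ∧ p.2 k ≠ b₀ k) ?_).trans (count_12 s₀ hs₀ b₀ hb₀)
    intro s b hcard hb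
    simp only [Set.nonempty_iff_ne_empty, ne_eq, hdisj s b hb, pface_eq_iff hb hb₀,
      Prod.mk.injEq]
  · refine (ncard_filter_two _ (fun p : Pm =>
      ∃ k, k ∉ p.1 ∧ k ∉ s₀ ∧ p.2 k ≠ b₀ k) ?_).trans (count_11 s₀ hs₀ b₀ hb₀)
    intro s b hcard hb
    exact hdisj s b hb
  · exact ⟨⟨_, {i}ᶜ, by rw [Finset.card_compl, Finset.card_singleton, Fintype.card_fin], rfl⟩,
      pface_subset_Q4 (norm_compl i _)⟩
  · exact ⟨⟨_, {j}ᶜ, by rw [Finset.card_compl, Finset.card_singleton, Fintype.card_fin], rfl⟩,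
      pface_subset_Q4 (norm_compl j _)⟩
  · rw [hC, hD, three_face_inter hij]
    exact ⟨_, ({i, j}ᶜ : Finset (Fin 4)), by rw [Finset.card_compl]; simp [hij], rfl⟩
  · refine (ncard_filter_two _ (fun p : Pm =>
      (∃ k, k ∉ p.1 ∧ k ∉ s₀ ∧ p.2 k ≠ b₀ k) ∧ (i ∉ p.1 ∧ p.2 i = !b₀ i)) ?_).trans
      (count_6 s₀ hs₀ b₀ hb₀ i hi)
    intro s b hcard hb
    rw [hdisj s b hb, hC, subset_compl_face hb]
  · refine (ncard_filter_two _ (fun p : Pm =>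
      (∃ k, k ∉ p.1 ∧ k ∉ s₀ ∧ p.2 k ≠ b₀ k) ∧
        ((j ∉ p.1 ∧ p.2 j = !b₀ j) ∧ ¬(i ∉ p.1 ∧ p.2 i = !b₀ i))) ?_).trans
      (count_5 s₀ hs₀ b₀ hb₀ i j hi hj hij)
    intro s b hcard hb
    rw [hdisj s b hb, hC, hD, subset_compl_face hb, subset_compl_face hb]
  · rintro G ⟨hG1, hG2⟩ hGF
    obtain ⟨t, c, hcard, hc, rfl⟩ := repr_face hG1 hG2
    obtain ⟨k, hkt, hks, hkb⟩ := (hdisj t c hc).1 hGF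
    have hk : k ∈ ({i, j} : Finset (Fin 4)) := hij2 ▸ Finset.mem_compl.2 hks
    simp only [Finset.mem_insert, Finset.mem_singleton] at hk
    rcases hk with rfl | rfl
    · left
      rw [hC, subset_compl_face hc]
      exact ⟨hkt, bool_ne_iff.1 hkb⟩
    · right
      rw [hD, subset_compl_face hc]
      exact ⟨hkt, bool_ne_iff.1 hkb⟩
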